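/- Let n ≥ 2 and let a, b : Fin n → ℝ. For every ε > 0 there exists b' : Fin n → ℝ with |b_i − b'_i| < ε for all i, such that the characteristic polynomial p of the n-node ring Jacobian J(a,b'), regarded as a polynomial over ℂ, has no resonance: for every rational number k with k ≠ 1 and k ≠ −1, there is no λ ∈ ℂ with p(λ) = 0 and p(kλ) = 0. In particular, all resonances among eigenvalues can be removed by arbitrarily small perturbations of the coupling entries b alone, keeping the diagonal entries a fixed. -/

import Mathlib

open Polynomial

/-- The n-node ring Jacobian: diagonal entries `a i`, entries `b i` in position
`(i, i+1 mod n)`, all other entries zero. -/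
def ringJacobianN (n : ℕ) (a b : Fin n → ℝ) : Matrix (Fin n) (Fin n) ℝ :=
  Matrix.of fun i j =>
    if (j : ℕ) = (i : ℕ) then a i
    else if (j : ℕ) = ((i : ℕ) + 1) % n then b i else 0

open Fin.NatCast Fin.CommRing in
lemma perm_shift_aux {m : ℕ} (σ : Equiv.Perm (Fin (m+2)))
    (h : ∀ i, σ i = i ∨ σ i = i - 1) (hσ : σ ≠ 1) : ∀ j, σ j = j - 1 := by
  have h10 : (1 : Fin (m+2)) ≠ 0 := by simp [Fin.ext_iff]
  obtain ⟨i0, hi0⟩ : ∃ i, σ i ≠ i := by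
    by_contra hc
    push_neg at hc
    exact hσ (Equiv.ext fun i => hc i)
  have hi0' : σ i0 = i0 - 1 := (h i0).resolve_left hi0
  have key : ∀ m' : ℕ, σ (i0 - (m' : Fin (m+2))) = i0 - (m' : Fin (m+2)) - 1 := by
    intro m'
    induction m' with
    | zero => simpa using hi0'
    | succ l ih =>
      set j := i0 - (l : Fin (m+2)) with hj
      have hcast : ((l+1 : ℕ) : Fin (m+2)) = (l : Fin (m+2)) + 1 := by push_cast; ring
      rw [hcast, ← sub_sub, ← hj]
      rcases h (j - 1) with hc | hc
      · exfalso
        have hjj : j = j - 1 := σ.injective (ih.trans hc.symm)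
        exact h10 (sub_eq_self.mp hjj.symm)
      · exact hc
  intro j
  have := key ((i0 - j) : Fin (m+2)).val
  rwa [Fin.cast_val_eq_self, sub_sub_cancel] at this

lemma charpoly_ring_aux (m : ℕ) (a b : Fin (m+2) → ℝ) :
    (ringJacobianN (m+2) a b).charpoly
      = ∏ i, (X - C (a i)) - C (∏ i, b i) := by
  have h10 : (1 : Fin (m+2)) ≠ 0 := by simp [Fin.ext_iff]
  have hsub : ∀ i : Fin (m+2), i - 1 ≠ i := fun i h => h10 (sub_eq_self.mp h)
  set M := ringJacobianN (m+2) a b with hM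
  have e1 : ∀ i, M i i = a i := by intro i; simp [hM, ringJacobianN]
  have e2 : ∀ i : Fin (m+2), M (i - 1) i = b (i - 1) := by
    intro i
    have hne : (i : ℕ) ≠ ((i - 1 : Fin (m+2)) : ℕ) := by
      intro h; exact hsub i (Fin.val_injective h.symm)
    have hval : (i : ℕ) = (((i - 1 : Fin (m+2)) : ℕ) + 1) % (m+2) := by
      conv_lhs => rw [← sub_add_cancel i 1]
      rw [Fin.val_add, Fin.val_one]
    rw [hM]
    show (if (i : ℕ) = ((i - 1 : Fin (m+2)) : ℕ) then a (i-1)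
      else if (i : ℕ) = (((i - 1 : Fin (m+2)) : ℕ) + 1) % (m+2) then b (i-1) else 0) = b (i-1)
    rw [if_neg hne, if_pos hval]
  have e3 : ∀ i j : Fin (m+2), j ≠ i → j ≠ i - 1 → M j i = 0 := by
    intro i j hji hji'
    have h1 : (i : ℕ) ≠ (j : ℕ) := fun h => hji (Fin.val_injective h.symm)
    have h2 : (i : ℕ) ≠ ((j : ℕ) + 1) % (m+2) := by
      intro h
      apply hji'
      have : i = j + 1 := Fin.val_injective (by rw [Fin.val_add, Fin.val_one, h])
      rw [this]; exact (add_sub_cancel_right j 1).symm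
    rw [hM]
    show (if (i : ℕ) = (j : ℕ) then a j
      else if (i : ℕ) = ((j : ℕ) + 1) % (m+2) then b j else 0) = 0
    rw [if_neg h1, if_neg h2]
  set c : Equiv.Perm (Fin (m+2)) := (finRotate (m+2))⁻¹ with hcdef
  have hc : ∀ i, c i = i - 1 := by
    intro i
    rw [hcdef, Equiv.Perm.inv_def, Equiv.symm_apply_eq, finRotate_succ_apply, sub_add_cancel]
  have h1c : (1 : Equiv.Perm (Fin (m+2))) ≠ c := by
    intro h
    have := hc 0
    rw [← h] at this
    exact h10 (sub_eq_self.mp this.symm)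
  rw [Matrix.charpoly, Matrix.det_apply]
  rw [← Finset.sum_subset (Finset.subset_univ ({1, c} : Finset (Equiv.Perm (Fin (m+2)))))]
  · rw [Finset.sum_pair h1c]
    have T1 : (Equiv.Perm.sign (1 : Equiv.Perm (Fin (m+2)))) •
        ∏ i, (Matrix.charmatrix M) ((1 : Equiv.Perm (Fin (m+2))) i) i
          = ∏ i, (X - C (a i)) := by
      rw [map_one, one_smul]
      refine Finset.prod_congr rfl fun i _ => ?_
      rw [Equiv.Perm.one_apply, Matrix.charmatrix_apply_eq, e1]
    have T2 : (Equiv.Perm.sign c) • ∏ i, (Matrix.charmatrix M) (c i) i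
        = -C (∏ i, b i) := by
      have hsign : Equiv.Perm.sign c = (-1 : ℤˣ)^(m+1) := by
        rw [hcdef, map_inv, sign_finRotate]; rfl
      have hprod : ∏ i, (Matrix.charmatrix M) (c i) i
          = ∏ i : Fin (m+2), -C (b (i - 1)) := by
        refine Finset.prod_congr rfl fun i _ => ?_
        rw [hc, Matrix.charmatrix_apply_ne _ _ _ (hsub i), e2]
      rw [hsign, hprod]
      have hneg : ∏ i : Fin (m+2), -C (b (i - 1))
          = (-1 : ℝ[X])^(m+2) * C (∏ i : Fin (m+2), b (i - 1)) := by
        have : ∀ i : Fin (m+2), -C (b (i - 1)) = (-1 : ℝ[X]) * C (b (i - 1)) :=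
          fun i => (neg_one_mul _).symm
        rw [Finset.prod_congr rfl fun i _ => this i, Finset.prod_mul_distrib,
          Finset.prod_const, Finset.card_univ, Fintype.card_fin, map_prod]
      rw [hneg]
      have hre : ∏ i : Fin (m+2), b (i - 1) = ∏ i, b i := by
        have := Equiv.prod_comp (Equiv.subRight (1 : Fin (m+2))) b
        simpa [Equiv.subRight_apply] using this
      rw [hre, Units.smul_def]
      have hcast : (((-1 : ℤˣ)^(m+1) : ℤˣ) : ℤ) = (-1 : ℤ)^(m+1) := by push_cast; ring
      rw [hcast, zsmul_eq_mul]
      push_cast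
      rw [← mul_assoc, ← pow_add]
      have hodd : Odd (m + 1 + (m + 2)) := ⟨m + 1, by omega⟩
      rw [hodd.neg_one_pow]
      ring
    rw [T1, T2]
    ring
  · intro σ _ hσ
    simp only [Finset.mem_insert, Finset.mem_singleton] at hσ
    push_neg at hσ
    obtain ⟨hσ1, hσc⟩ := hσ
    have hex : ¬ ∀ i, σ i = i ∨ σ i = i - 1 := by
      intro hall
      exact hσc (Equiv.ext fun j => by rw [perm_shift_aux σ hall hσ1, hc])
    push_neg at hex
    obtain ⟨i, hi1, hi2⟩ := hex
    have hz : (Matrix.charmatrix M) (σ i) i = 0 := by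
      rw [Matrix.charmatrix_apply_ne _ _ _ hi1, e3 i (σ i) hi1 hi2, map_zero, neg_zero]
    have hz2 : ∏ j : Fin (m+2), (Matrix.charmatrix M) (σ j) j = 0 :=
      Finset.prod_eq_zero (Finset.mem_univ i) hz
    rw [hz2, smul_zero]

lemma rk_ne_zero_aux (n : ℕ) (hn : 1 ≤ n) (Q : ℂ[X]) (hQm : Q.Monic) (hQd : Q.natDegree = n)
    (k : ℚ) (hk1 : k ≠ 1) (hk2 : k ≠ -1) :
    Q - Q.comp (C (k:ℂ) * X) ≠ 0 := by
  have hkn : ((k:ℂ))^n ≠ 1 := by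
    intro h
    have hq : (k:ℚ)^n = 1 := by
      have : (((k^n : ℚ)) : ℂ) = ((1:ℚ) : ℂ) := by push_cast; exact h
      exact_mod_cast this
    have habs : |k|^n = 1 := by
      rw [← abs_pow, hq, abs_one]
    have : |k| = 1 := by
      rcases lt_trichotomy |k| 1 with h' | h' | h'
      · exact absurd habs (by nlinarith [pow_lt_one₀ (abs_nonneg k) h' (by omega : n ≠ 0)])
      · exact h'
      · exact absurd habs (by nlinarith [one_lt_pow₀ h' (by omega : n ≠ 0)])
    rcases abs_eq (by norm_num : (0:ℚ) ≤ 1) |>.mp this with h' | h'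
    · exact hk1 h'
    · exact hk2 h'
  intro h
  have hcoeff : (Q - Q.comp (C (k:ℂ) * X)).coeff n = 1 - (k:ℂ)^n := by
    rw [coeff_sub]
    have h1 : Q.coeff n = 1 := by rw [← hQd]; exact hQm.coeff_natDegree
    by_cases hk0 : (k:ℂ) = 0
    · rw [hk0]
      simp only [map_zero, zero_mul, zero_pow (by omega : n ≠ 0)]
      rw [h1, comp_zero, coeff_C, if_neg (by omega : n ≠ 0), sub_zero]
    · have hdeg : (C (k:ℂ) * X).natDegree = 1 := by
        rw [natDegree_C_mul_X _ hk0]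
      have hlc : (C (k:ℂ) * X).leadingCoeff = (k:ℂ) := by
        rw [leadingCoeff, hdeg, coeff_C_mul, coeff_X_one, mul_one]
      have hcompdeg : (Q.comp (C (k:ℂ) * X)).natDegree = n := by
        rw [natDegree_comp, hdeg, hQd, mul_one]
      have hcomplc : (Q.comp (C (k:ℂ) * X)).leadingCoeff = (k:ℂ)^n := by
        rw [leadingCoeff_comp (by rw [hdeg]; norm_num), hlc, hQm.leadingCoeff, one_mul, hQd]
      rw [h1, ← hcompdeg]
      rw [← leadingCoeff, hcomplc, hcompdeg]
  rw [h, coeff_zero] at hcoeff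
  exact sub_ne_zero.mpr hkn.symm hcoeff.symm

lemma bad_countable_aux (n : ℕ) (hn : 1 ≤ n) (Q : ℂ[X]) (hQm : Q.Monic) (hQd : Q.natDegree = n) :
    {t : ℝ | ∃ k : ℚ, k ≠ 1 ∧ k ≠ -1 ∧ ∃ lam : ℂ,
      (Q - C (t:ℂ)).IsRoot lam ∧ (Q - C (t:ℂ)).IsRoot ((k:ℂ)*lam)}.Countable := by
  have hsub : {t : ℝ | ∃ k : ℚ, k ≠ 1 ∧ k ≠ -1 ∧ ∃ lam : ℂ,
      (Q - C (t:ℂ)).IsRoot lam ∧ (Q - C (t:ℂ)).IsRoot ((k:ℂ)*lam)} ⊆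
      ⋃ k : ℚ, Complex.ofReal ⁻¹'
        (Q.eval '' {lam : ℂ | Q - Q.comp (C (k:ℂ) * X) ≠ 0 ∧
          (Q - Q.comp (C (k:ℂ) * X)).IsRoot lam}) := by
    rintro t ⟨k, hk1, hk2, lam, h1, h2⟩
    refine Set.mem_iUnion.mpr ⟨k, ?_⟩
    have hr := rk_ne_zero_aux n hn Q hQm hQd k hk1 hk2
    simp only [IsRoot, eval_sub, eval_C, sub_eq_zero] at h1 h2
    refine ⟨lam, ⟨hr, ?_⟩, h1⟩
    simp only [IsRoot, eval_sub, eval_comp, eval_mul, eval_C, eval_X]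
    rw [h1, h2, sub_self]
  refine Set.Countable.mono hsub (Set.countable_iUnion fun k => ?_)
  by_cases hr : Q - Q.comp (C (k:ℂ) * X) = 0
  · have : {lam : ℂ | Q - Q.comp (C (k:ℂ) * X) ≠ 0 ∧
        (Q - Q.comp (C (k:ℂ) * X)).IsRoot lam} = ∅ := by
      ext lam; simp [hr]
    rw [this]
    simp
  · have hfin : {lam : ℂ | Q - Q.comp (C (k:ℂ) * X) ≠ 0 ∧
        (Q - Q.comp (C (k:ℂ) * X)).IsRoot lam}.Finite := by
      refine Set.Finite.subset (Polynomial.finite_setOf_isRoot hr) ?_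
      intro lam hlam; exact hlam.2
    exact ((hfin.image _).preimage (Complex.ofReal_injective.injOn)).countable

theorem no_resonance_generic_ringJacobianN (n : ℕ) (hn : 2 ≤ n)
    (a b : Fin n → ℝ) :
    ∀ ε > (0 : ℝ), ∃ b' : Fin n → ℝ,
      (∀ i, |b i - b' i| < ε) ∧
      ∀ k : ℚ, k ≠ 1 → k ≠ -1 →
        ¬ ∃ lam : ℂ,
          ((ringJacobianN n a b').map Complex.ofReal).charpoly.IsRoot lam ∧
          ((ringJacobianN n a b').map Complex.ofReal).charpoly.IsRoot ((k : ℂ) * lam) := by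
  obtain ⟨m, rfl⟩ : ∃ m, n = m + 2 := ⟨n - 2, by omega⟩
  intro ε hε
  -- perturbed off-diagonal entries, all nonzero
  set b1 : Fin (m+2) → ℝ := fun i => if b i = 0 then ε/2 else b i with hb1def
  have hb1 : ∀ i, b1 i ≠ 0 := by
    intro i
    rw [hb1def]
    by_cases h : b i = 0 <;> simp [h] <;> positivity
  set P : ℝ := ∏ i ∈ Finset.univ.erase (0 : Fin (m+2)), b1 i with hPdef
  have hP : P ≠ 0 := Finset.prod_ne_zero_iff.mpr fun i _ => hb1 i
  -- the fixed part of the characteristic polynomial over ℂ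
  set Q : ℂ[X] := ∏ i : Fin (m+2), (X - C ((a i : ℂ))) with hQdef
  have hQm : Q.Monic := monic_prod_of_monic _ _ fun i _ => monic_X_sub_C _
  have hQd : Q.natDegree = m + 2 := by
    rw [hQdef, natDegree_prod_of_monic _ _ fun i _ => monic_X_sub_C _]
    simp [natDegree_X_sub_C]
  set S : Set ℝ := {t : ℝ | ∃ k : ℚ, k ≠ 1 ∧ k ≠ -1 ∧ ∃ lam : ℂ,
      (Q - C (t:ℂ)).IsRoot lam ∧ (Q - C (t:ℂ)).IsRoot ((k:ℂ)*lam)} with hSdef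
  have hS : S.Countable := bad_countable_aux (m+2) (by omega) Q hQm hQd
  -- the set of bad choices for the 0th entry
  have hS' : {s : ℝ | s * P ∈ S}.Countable := by
    refine Set.Countable.mono ?_ (hS.image (fun t => t / P))
    intro s hs
    exact ⟨s * P, hs, by field_simp⟩
  -- pick a good value in the interval
  have hIoo : ¬ (Set.Ioo (b 0 - ε) (b 0 + ε) ⊆ {s : ℝ | s * P ∈ S}) := by
    intro hcon
    have hcnt : (Set.Ioo (b 0 - ε) (b 0 + ε)).Countable := hS'.mono hcon
    have hmk := Cardinal.mk_Ioo_real (show b 0 - ε < b 0 + ε by linarith)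
    rw [← Cardinal.le_aleph0_iff_set_countable] at hcnt
    rw [hmk] at hcnt
    exact absurd hcnt (by simp [Cardinal.aleph0_lt_continuum.not_ge])
  obtain ⟨s, hsIoo, hsS⟩ := Set.not_subset.mp hIoo
  refine ⟨Function.update b1 0 s, ?_, ?_⟩
  · intro i
    by_cases hi : i = 0
    · subst hi
      rw [Function.update_self]
      simp only [Set.mem_Ioo] at hsIoo
      rw [abs_sub_lt_iff]
      constructor <;> linarith [hsIoo.1, hsIoo.2]
    · rw [Function.update_of_ne hi]
      show |b i - (if b i = 0 then ε/2 else b i)| < ε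
      by_cases h : b i = 0
      · rw [if_pos h, h, zero_sub, abs_neg, abs_of_pos (by positivity)]
        linarith
      · rw [if_neg h, sub_self, abs_zero]
        exact hε
  · -- the product of the updated entries
    have hprod : ∏ i, Function.update b1 0 s i = s * P := by
      rw [← Finset.mul_prod_erase Finset.univ _ (Finset.mem_univ (0 : Fin (m+2))),
        Function.update_self, hPdef]
      congr 1
      refine Finset.prod_congr rfl fun i hi => ?_
      rw [Function.update_of_ne (Finset.ne_of_mem_erase hi)]
    have hcp : ((ringJacobianN (m+2) a (Function.update b1 0 s)).map Complex.ofReal).charpoly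
        = Q - C ((s * P : ℝ) : ℂ) := by
      have hmapeq : (ringJacobianN (m+2) a (Function.update b1 0 s)).map Complex.ofReal
          = (ringJacobianN (m+2) a (Function.update b1 0 s)).map (algebraMap ℝ ℂ) := by
        rw [Complex.coe_algebraMap]
      rw [hmapeq, Matrix.charpoly_map, charpoly_ring_aux, Polynomial.map_sub,
        Polynomial.map_prod, map_C, hprod, hQdef]
      simp only [Polynomial.map_sub, map_X, map_C, Complex.coe_algebraMap]
    intro k hk1 hk2 hex
    obtain ⟨lam, h1, h2⟩ := hex
    rw [hcp] at h1 h2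
    exact hsS ⟨k, hk1, hk2, lam, h1, h2⟩
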